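/- The relaxed demand-based model and the relaxed origin-based model are equivalent in feasibility: the demand-based model (0-1 per-demand flows with conservation, capacity, and sub-path optimality constraints) has a feasible solution if and only if the origin-based model (0-1 per-origin tree indicators y with in-degree constraints, nonnegative aggregated flows f with conservation, flow bounds, and capacity constraints) has a feasible solution. -/

import Mathlib

namespace DOFaux

set_option linter.unusedSectionVars false

variable {V : Type} [DecidableEq V]

/-- Edge list of a path given as vertex list `[v₀, v₁, ..., vₘ]`:
edges `(v₁,v₀), (v₂,v₁), ...` (each edge directed towards the earlier vertex). -/
def pE : List V → List (V × V)
  | a :: b :: l => (b, a) :: pE (b :: l)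
  | _ => []

@[simp] lemma pE_nil : pE ([] : List V) = [] := rfl
@[simp] lemma pE_single (a : V) : pE [a] = [] := rfl
@[simp] lemma pE_cons (a b : V) (l : List V) : pE (a :: b :: l) = (b, a) :: pE (b :: l) := rfl

lemma length_pE : ∀ p : List V, (pE p).length = p.length - 1
  | [] => rfl
  | [_] => rfl
  | a :: b :: l => by simp [pE, length_pE (b :: l)]

lemma map_snd_pE : ∀ p : List V, (pE p).map Prod.snd = p.dropLast
  | [] => rfl
  | [_] => rfl
  | a :: b :: l => by simp [pE, map_snd_pE (b :: l)]

lemma map_fst_pE : ∀ p : List V, (pE p).map Prod.fst = p.tail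
  | [] => rfl
  | [_] => rfl
  | a :: b :: l => by
      simp only [pE, List.map_cons, map_fst_pE (b :: l), List.tail_cons]

lemma nodup_pE {p : List V} (h : p.Nodup) : (pE p).Nodup := by
  have h1 : (p.dropLast).Nodup := h.sublist (List.dropLast_sublist p)
  have := map_snd_pE p ▸ h1
  exact this.of_map _

lemma pE_concat : ∀ (p : List V) (h : p ≠ []) (u : V),
    pE (p ++ [u]) = pE p ++ [(u, p.getLast h)]
  | [], h, u => absurd rfl h
  | [a], _, u => rfl
  | a :: b :: l, _, u => by
      have := pE_concat (b :: l) (by simp) u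
      rw [show ((a :: b :: l) ++ [u]) = a :: b :: (l ++ [u]) from rfl, pE_cons,
        show (b :: (l ++ [u])) = (b :: l) ++ [u] from rfl, this, pE_cons]
      simp [List.getLast]

lemma getElem_pE : ∀ (p : List V) (j : ℕ) (hj : j + 1 < p.length),
    (pE p)[j]'(by rw [length_pE]; omega) =
      (p[j+1], p[j]'(by omega))
  | a :: b :: l, 0, _ => rfl
  | a :: b :: l, (j+1), hj => by
      have := getElem_pE (b :: l) j (by simpa using Nat.lt_of_succ_lt_succ hj)
      simpa [pE] using this

end DOFaux

namespace DOFaux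
set_option linter.unusedSectionVars false

variable {V : Type} [DecidableEq V]

lemma length_filter_nodup {l : List V} (h : l.Nodup) (i : V) :
    (l.filter (fun a => a = i)).length = if i ∈ l then 1 else 0 := by
  induction l with
  | nil => simp
  | cons a l ih =>
    rcases List.nodup_cons.1 h with ⟨ha, hl⟩
    by_cases hai : a = i
    · subst hai
      simp [List.filter_cons, ha, ih hl]
    · simp [List.filter_cons, hai, ih hl, Ne.symm hai]

lemma sum_indicator_filter (L E : Finset (V × V)) (hE : E ⊆ L) (P : V × V → Prop)
    [DecidablePred P] :
    ∑ e ∈ L.filter P, (if e ∈ E then (1 : ℕ) else 0) = (E.filter P).card := by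
  rw [Finset.sum_boole]
  norm_cast
  congr 1
  ext e
  simp only [Finset.mem_filter]
  exact ⟨fun ⟨⟨_, h2⟩, h3⟩ => ⟨h3, h2⟩, fun ⟨h1, h2⟩ => ⟨⟨hE h1, h2⟩, h1⟩⟩

lemma card_filter_pE_snd {p : List V} (h : p.Nodup) (i : V) :
    ((pE p).toFinset.filter (fun e => e.2 = i)).card = if i ∈ p.dropLast then 1 else 0 := by
  have h1 : Finset.filter (fun e => e.2 = i) (pE p).toFinset
      = ((pE p).filter (fun e => e.2 = i)).toFinset := by
    ext e; simp
  rw [h1, List.toFinset_card_of_nodup ((nodup_pE h).filter _)]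
  have : ((pE p).filter (fun e => e.2 = i)).length
      = (((pE p).map Prod.snd).filter (fun a => a = i)).length := by
    rw [← List.countP_eq_length_filter, ← List.countP_eq_length_filter, List.countP_map]
    rfl
  rw [this, map_snd_pE]
  exact length_filter_nodup (h.sublist (List.dropLast_sublist p)) i

lemma card_filter_pE_fst {p : List V} (h : p.Nodup) (i : V) :
    ((pE p).toFinset.filter (fun e => e.1 = i)).card = if i ∈ p.tail then 1 else 0 := by
  have h1 : Finset.filter (fun e => e.1 = i) (pE p).toFinset
      = ((pE p).filter (fun e => e.1 = i)).toFinset := by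
    ext e; simp
  rw [h1, List.toFinset_card_of_nodup ((nodup_pE h).filter _)]
  have : ((pE p).filter (fun e => e.1 = i)).length
      = (((pE p).map Prod.fst).filter (fun a => a = i)).length := by
    rw [← List.countP_eq_length_filter, ← List.countP_eq_length_filter, List.countP_map]
    rfl
  rw [this, map_fst_pE]
  exact length_filter_nodup (h.sublist (List.tail_sublist p)) i

end DOFaux

namespace DOFaux
set_option linter.unusedSectionVars false

variable {V : Type} [DecidableEq V]

lemma ne_nil_of_head? {p : List V} {t : V} (hh : p.head? = some t) : p ≠ [] := by
  intro h; subst h; simp at hh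

lemma head_eq {p : List V} {t : V} (hh : p.head? = some t) :
    p = t :: p.tail := by
  have hne := ne_nil_of_head? hh
  have := List.head?_eq_head hne
  rw [hh] at this
  conv_lhs => rw [← List.cons_head_tail hne]
  rw [← Option.some_inj.1 this.symm]

lemma last_eq {p : List V} {s : V} (hl : p.getLast? = some s) (hne : p ≠ []) :
    p = p.dropLast ++ [s] := by
  have := List.getLast?_eq_getLast hne
  rw [hl] at this
  conv_lhs => rw [← List.dropLast_append_getLast hne]
  rw [← Option.some_inj.1 this.symm]

lemma length_two_le {p : List V} {s t : V} (hh : p.head? = some t)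
    (hl : p.getLast? = some s) (hts : t ≠ s) : 2 ≤ p.length := by
  have hne := ne_nil_of_head? hh
  rcases p with _ | ⟨a, _ | ⟨b, l⟩⟩
  · exact absurd rfl hne
  · simp_all
  · simp

lemma mem_count_combine {p : List V} {s t : V} (hnd : p.Nodup)
    (hh : p.head? = some t) (hl : p.getLast? = some s) (hts : t ≠ s) (i : V) :
    (if i ∈ p.dropLast then (1 : ℤ) else 0) - (if i ∈ p.tail then 1 else 0)
      = if i = s then -1 else if i = t then 1 else 0 := by
  have hne := ne_nil_of_head? hh
  have hid1 := last_eq hl hne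
  have hid2 := head_eq hh
  have hlen := length_two_le hh hl hts
  -- s ∉ p.dropLast
  have hs1 : s ∉ p.dropLast := by
    have := hid1 ▸ hnd
    exact fun hmem => (List.disjoint_of_nodup_append this) hmem (by simp)
  -- t ∉ p.tail
  have ht1 : t ∉ p.tail := by
    have := hid2 ▸ hnd
    exact (List.nodup_cons.1 this).1
  -- s ∈ p.tail
  have hs2 : s ∈ p.tail := by
    have hsp : s ∈ p := by rw [hid1]; simp
    rw [hid2] at hsp
    rcases List.mem_cons.1 hsp with h | h
    · exact absurd h.symm hts
    · exact h
  -- t ∈ p.dropLast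
  have ht2 : t ∈ p.dropLast := by
    have htp : t ∈ p := by rw [hid2]; simp
    rw [hid1] at htp
    rcases List.mem_append.1 htp with h | h
    · exact h
    · simp at h; exact absurd h hts
  by_cases his : i = s
  · subst his; simp [hs1, hs2]
  · by_cases hit : i = t
    · subst hit; simp [ht1, ht2, his]
    · -- i ∈ dropLast ↔ i ∈ p ↔ i ∈ tail
      have e1 : i ∈ p.dropLast ↔ i ∈ p := by
        conv_rhs => rw [hid1]
        simp [his]
      have e2 : i ∈ p.tail ↔ i ∈ p := by
        conv_rhs => rw [hid2]
        simp [hit]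
      by_cases hip : i ∈ p
      · simp [e1.2 hip, e2.2 hip, his, hit]
      · have d1 : i ∉ p.dropLast := fun h => hip (e1.1 h)
        have d2 : i ∉ p.tail := fun h => hip (e2.1 h)
        simp [d1, d2, his, hit]

end DOFaux

namespace DOFaux
set_option linter.unusedSectionVars false

lemma mono_of_adj {A : ℕ → ℝ} {m : ℕ} (h : ∀ j, j + 1 < m → A j ≤ A (j + 1)) :
    ∀ a b, a ≤ b → b < m → A a ≤ A b := by
  intro a b
  induction b with
  | zero => intro hab _; rw [Nat.le_zero.1 hab]
  | succ b ih =>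
    intro hab hbm
    rcases Nat.eq_or_lt_of_le hab with h1 | h1
    · subst h1; exact le_refl _
    · exact le_trans (ih (by omega) (by omega)) (h b hbm)

lemma exists_pos_of_sum_pos {A : Type} {S : Finset A} {g : A → ℝ}
    (h : 0 < ∑ e ∈ S, g e) : ∃ e ∈ S, 0 < g e := by
  by_contra hc
  push_neg at hc
  exact absurd (Finset.sum_nonpos hc) (by linarith)

lemma pair_le_sum {A : Type} [DecidableEq A] {S : Finset A} {g : A → ℝ}
    (hg : ∀ e, 0 ≤ g e) {a b : A} (ha : a ∈ S) (hb : b ∈ S) (hab : a ≠ b) :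
    g a + g b ≤ ∑ e ∈ S, g e := by
  rw [← Finset.sum_pair hab]
  exact Finset.sum_le_sum_of_subset_of_nonneg
    (Finset.insert_subset ha (Finset.singleton_subset_iff.2 hb)) (fun i _ _ => hg i)

end DOFaux

namespace DOFaux
set_option linter.unusedSectionVars false
set_option maxHeartbeats 1000000

lemma exists_walk {V : Type} [Fintype V] [DecidableEq V]
    (L : Finset (V × V)) (g : V × V → ℝ) (hg : ∀ e, 0 ≤ g e)
    (s t : V) (hts : t ≠ s) (δ : V → ℝ)
    (hδ : ∀ i, i ≠ s → 0 ≤ δ i) (hδt : 0 < δ t)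
    (hcons : ∀ i, i ≠ s →
      ∑ e ∈ L.filter (fun e => e.2 = i), g e
        = ∑ e ∈ L.filter (fun e => e.1 = i), g e + δ i)
    (huniq : ∀ i, i ≠ s → ∀ e, e ∈ L → e.2 = i → 0 < g e →
      ∀ e', e' ∈ L → e'.2 = i → 0 < g e' → e = e') :
    ∃ p : List V, p.Nodup ∧ p.head? = some t ∧ p.getLast? = some s ∧
      ∀ e ∈ pE p, e ∈ L ∧ 0 < g e := by
  suffices H : ∀ (n : ℕ) (q : List V), q ≠ [] → q.Nodup → q.head? = some t → s ∉ q →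
      (∀ e ∈ pE q, e ∈ L ∧ 0 < g e) → Fintype.card V + 1 ≤ q.length + n →
      ∃ p : List V, p.Nodup ∧ p.head? = some t ∧ p.getLast? = some s ∧
        ∀ e ∈ pE p, e ∈ L ∧ 0 < g e by
    refine H (Fintype.card V + 1) [t] (by simp) (by simp) (by simp) ?_ (by simp [pE]) (by simp)
    simp only [List.mem_singleton]
    exact fun h => hts (h.symm)
  intro n
  induction n with
  | zero =>
    intro q hq hnd hh hs hE hlen
    exfalso
    have := hnd.length_le_card
    omega
  | succ n ih =>
    intro q hq hnd hh hs hE hlen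
    have hv : q.getLast hq ∈ q := List.getLast_mem hq
    set v := q.getLast hq with hvdef
    have hvs : v ≠ s := fun h => hs (h ▸ hv)
    set m := q.length - 1 with hmdef
    have hqlen : q.length = m + 1 := by
      have := List.length_pos_iff.2 hq; omega
    -- vertex function
    set w : ℕ → V := fun j => q.getD j t with hwdef
    have hwq : ∀ (j : ℕ) (hj : j ≤ m), w j = q[j]'(by omega) := by
      intro j hj
      simp only [hwdef, List.getD_eq_getElem?_getD]
      rw [List.getElem?_eq_getElem (by omega : j < q.length)]
      rfl
    have hwm : w m = v := by
      rw [hwq m le_rfl, hvdef, List.getLast_eq_getElem]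
    have hw0 : w 0 = t := by
      rw [hwq 0 (Nat.zero_le _)]
      have h1 : q.head? = some (q.head hq) := List.head?_eq_head hq
      rw [hh] at h1
      rw [← List.head_eq_getElem hq]
      exact (Option.some_inj.1 h1).symm
    have hwmem : ∀ (j : ℕ), j ≤ m → w j ∈ q := by
      intro j hj; rw [hwq j hj]; exact List.getElem_mem _
    have hwns : ∀ (j : ℕ), j ≤ m → w j ≠ s := fun j hj h => hs (h ▸ hwmem j hj)
    have hwinj : ∀ (a b : ℕ), a ≤ m → b ≤ m → w a = w b → a = b := by
      intro a b ha hb hab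
      rw [hwq a ha, hwq b hb] at hab
      exact (List.Nodup.getElem_inj_iff hnd).1 hab
    -- edges of the walk
    have hedge : ∀ (j : ℕ), j < m → ((w (j+1), w j) ∈ L ∧ 0 < g (w (j+1), w j)) := by
      intro j hj
      have h1 : j + 1 < q.length := by omega
      have h2 : (pE q)[j]'(by rw [length_pE]; omega) = (q[j+1], q[j]'(by omega)) :=
        getElem_pE q j h1
      have h3 : (pE q)[j]'(by rw [length_pE]; omega) ∈ pE q := List.getElem_mem _
      have h4 := hE _ h3
      rw [h2] at h4
      rw [hwq (j+1) (by omega), hwq j (by omega)]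
      exact h4
    have hout_nonneg : ∀ i : V, 0 ≤ ∑ e ∈ L.filter (fun e => e.1 = i), g e :=
      fun i => Finset.sum_nonneg (fun e _ => hg e)
    -- inflow positivity at v
    have hin_pos : 0 < ∑ e ∈ L.filter (fun e => e.2 = v), g e := by
      rw [hcons v hvs]
      rcases Nat.eq_zero_or_pos m with hm0 | hm1
      · have hvt : v = t := by rw [← hwm, hm0, hw0]
        rw [hvt]
        have := hout_nonneg t
        linarith
      · have hlast := hedge (m-1) (by omega)
        rw [show m - 1 + 1 = m from by omega, hwm] at hlast
        have h4 : g (v, w (m-1)) ≤ ∑ e ∈ L.filter (fun e => e.1 = v), g e :=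
          Finset.single_le_sum (fun e _ => hg e) (Finset.mem_filter.2 ⟨hlast.1, rfl⟩)
        have h5 := hδ v hvs
        linarith [hlast.2]
    obtain ⟨e, heM, hge⟩ := exists_pos_of_sum_pos hin_pos
    have heL : e ∈ L := (Finset.mem_filter.1 heM).1
    have hev : e.2 = v := (Finset.mem_filter.1 heM).2
    -- inflow sums collapse to the unique positive incoming edge
    have hinflow_eq : ∀ i, i ≠ s → ∀ e', e' ∈ L → e'.2 = i → 0 < g e' →
        ∑ e'' ∈ L.filter (fun e'' => e''.2 = i), g e'' = g e' := by
      intro i his e' he'L he'i hge'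
      refine Finset.sum_eq_single_of_mem e' (Finset.mem_filter.2 ⟨he'L, he'i⟩) ?_
      intro b hb hbe
      rcases (hg b).eq_or_lt with h | h
      · exact h.symm
      · exact absurd (huniq i his b (Finset.mem_filter.1 hb).1 (Finset.mem_filter.1 hb).2 h
          e' he'L he'i hge') hbe
    by_cases hus : e.1 = s
    · -- we have reached s : finish with q ++ [s]
      refine ⟨q ++ [s], ?_, ?_, ?_, ?_⟩
      · rw [List.nodup_append']
        exact ⟨hnd, by simp, by intro a ha hb; simp at hb; exact hs (hb ▸ ha)⟩
      · rcases q with _ | ⟨a, q'⟩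
        · exact absurd rfl hq
        · simpa using hh
      · simp
      · rw [pE_concat q hq s]
        intro e' he'
        rcases List.mem_append.1 he' with h | h
        · exact hE _ h
        · simp only [List.mem_singleton] at h
          have he : e = (s, v) := Prod.ext hus hev
          rw [h, ← hvdef, ← he]
          exact ⟨heL, hge⟩
    · -- extend the walk after showing e.1 is new
      have hu_notin : e.1 ∉ q := by
        intro huq
        obtain ⟨j₀, hj₀len, hj₀⟩ := List.getElem_of_mem huq
        have hj₀m : j₀ ≤ m := by omega
        have hwj₀ : w j₀ = e.1 := by rw [hwq j₀ hj₀m]; exact hj₀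
        set A : ℕ → ℝ := fun j => g (w (j+1), w j) with hA
        have hAj : ∀ j : ℕ, A j = g (w (j+1), w j) := fun j => rfl
        have hfv : ∑ e'' ∈ L.filter (fun e'' => e''.2 = v), g e'' = g e :=
          hinflow_eq v hvs e heL hev hge
        have hfin : ∀ (j : ℕ), j < m →
            A j = ∑ e' ∈ L.filter (fun e' => e'.1 = w j), g e' + δ (w j) := by
          intro j hj
          have h1 := hedge j hj
          have h2 := hinflow_eq (w j) (hwns j (by omega)) (w (j+1), w j) h1.1 rfl h1.2
          rw [hAj, ← h2, hcons (w j) (hwns j (by omega))]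
        have houtlb : ∀ (j : ℕ), j < m →
            A j ≤ ∑ e' ∈ L.filter (fun e' => e'.1 = w (j+1)), g e' := by
          intro j hj
          exact Finset.single_le_sum (fun e _ => hg e)
            (Finset.mem_filter.2 ⟨(hedge j hj).1, rfl⟩)
        have hmono : ∀ (j : ℕ), j + 1 < m → A j ≤ A (j+1) := by
          intro j hj
          have h1 := hfin (j+1) hj
          have h2 := houtlb j (by omega)
          have h4 := hδ (w (j+1)) (hwns (j+1) (by omega))
          linarith
        have hmono' := mono_of_adj hmono
        have hge_top : ∀ (j : ℕ), j < m → A j ≤ g e := by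
          intro j hj
          have h2 := hcons v hvs
          rw [hfv] at h2
          have h3 := houtlb (m-1) (by omega)
          rw [show m - 1 + 1 = m from by omega, hwm] at h3
          have h4 := hδ v hvs
          have h5 := hmono' j (m-1) (by omega) (by omega)
          linarith
        rcases Nat.eq_or_lt_of_le hj₀m with hj₀e | hj₀lt
        · -- e.1 = v (self loop at the end of the walk)
          have he1v : e.1 = v := by rw [← hwj₀, hj₀e, hwm]
          rcases Nat.eq_zero_or_pos m with hm0 | hm1
          · have hvt : v = t := by rw [← hwm, hm0, hw0]
            have h2 := hcons v hvs
            rw [hfv] at h2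
            have h3 : g e ≤ ∑ e' ∈ L.filter (fun e' => e'.1 = v), g e' :=
              Finset.single_le_sum (fun e _ => hg e) (Finset.mem_filter.2 ⟨heL, he1v⟩)
            have h4 : δ v = δ t := by rw [hvt]
            linarith [hδt]
          · have hb := hedge (m-1) (by omega)
            rw [show m - 1 + 1 = m from by omega, hwm] at hb
            have hne : e ≠ (v, w (m-1)) := by
              intro h
              have h1 : e.2 = w (m-1) := by rw [h]
              rw [hev, ← hwm] at h1
              have := hwinj m (m-1) le_rfl (by omega) h1
              omega
            have hp : g e + g (v, w (m-1)) ≤ ∑ e' ∈ L.filter (fun e' => e'.1 = v), g e' :=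
              pair_le_sum hg (Finset.mem_filter.2 ⟨heL, he1v⟩)
                (Finset.mem_filter.2 ⟨hb.1, rfl⟩) hne
            have h2 := hcons v hvs
            rw [hfv] at h2
            have h4 := hδ v hvs
            linarith [hb.2]
        · -- e.1 = w j₀ with j₀ < m
          rcases Nat.eq_zero_or_pos j₀ with hj00 | hj01
          · -- j₀ = 0 : e.1 = t
            have h1 := hfin 0 (by omega)
            have h3 : g e ≤ ∑ e' ∈ L.filter (fun e' => e'.1 = w 0), g e' :=
              Finset.single_le_sum (fun e _ => hg e)
                (Finset.mem_filter.2 ⟨heL, by rw [← hwj₀, hj00]⟩)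
            have h5 := hge_top 0 (by omega)
            have h6 : δ (w 0) = δ t := by rw [hw0]
            linarith [hδt]
          · -- 0 < j₀ < m
            have h1 := hfin j₀ hj₀lt
            have hb := hedge (j₀-1) (by omega)
            rw [show j₀ - 1 + 1 = j₀ from by omega] at hb
            have hne : e ≠ (w j₀, w (j₀-1)) := by
              intro h
              have h2 : e.2 = w (j₀-1) := by rw [h]
              rw [hev, ← hwm] at h2
              have := hwinj m (j₀-1) le_rfl (by omega) h2
              omega
            have hp : g e + g (w j₀, w (j₀-1)) ≤ ∑ e' ∈ L.filter (fun e' => e'.1 = w j₀), g e' :=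
              pair_le_sum hg (Finset.mem_filter.2 ⟨heL, hwj₀.symm⟩)
                (Finset.mem_filter.2 ⟨hb.1, rfl⟩) hne
            have h4 := hδ (w j₀) (hwns j₀ (by omega))
            have htp := hge_top j₀ hj₀lt
            linarith [hb.2]
      have hnd' : (q ++ [e.1]).Nodup := by
        rw [List.nodup_append']
        exact ⟨hnd, by simp, by intro a ha hb; simp at hb; exact hu_notin (hb ▸ ha)⟩
      refine ih (q ++ [e.1]) (by simp) hnd' ?_ ?_ ?_ (by simp at hlen ⊢; omega)
      · rcases q with _ | ⟨a, q'⟩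
        · exact absurd rfl hq
        · simpa using hh
      · intro hmem
        rcases List.mem_append.1 hmem with h | h
        · exact hs h
        · simp at h; exact hus h.symm
      · rw [pE_concat q hq e.1]
        intro e' he'
        rcases List.mem_append.1 he' with h | h
        · exact hE _ h
        · simp only [List.mem_singleton] at h
          have he : e = (e.1, v) := Prod.ext rfl hev
          rw [h, ← hvdef, ← he]
          exact ⟨heL, hge⟩

end DOFaux

namespace DOFaux
set_option linter.unusedSectionVars false

variable {V : Type} [DecidableEq V]

lemma sum_indicator_filter' {R : Type} [Ring R] (L E : Finset (V × V)) (hE : E ⊆ L)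
    (P : V × V → Prop) [DecidablePred P] [DecidableEq (V × V)] :
    ∑ e ∈ L.filter P, (if e ∈ E then (1 : R) else 0) = ((E.filter P).card : R) := by
  rw [Finset.sum_boole]
  have heq : Finset.filter (fun e => e ∈ E) (L.filter P) = E.filter P := by
    ext e
    simp only [Finset.mem_filter]
    exact ⟨fun ⟨⟨_, h2⟩, h3⟩ => ⟨h3, h2⟩, fun ⟨h1, h2⟩ => ⟨⟨hE h1, h2⟩, h1⟩⟩
  rw [heq]

lemma mem_count_combine' {R : Type} [Ring R] {p : List V} {s t : V} (hnd : p.Nodup)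
    (hh : p.head? = some t) (hl : p.getLast? = some s) (hts : t ≠ s) (i : V) :
    (if i ∈ p.dropLast then (1 : R) else 0) - (if i ∈ p.tail then 1 else 0)
      = if i = s then -1 else if i = t then 1 else 0 := by
  have hne := ne_nil_of_head? hh
  have hid1 := last_eq hl hne
  have hid2 := head_eq hh
  have hs1 : s ∉ p.dropLast := by
    have h := hid1 ▸ hnd
    exact fun hmem => (List.disjoint_of_nodup_append h) hmem (by simp)
  have ht1 : t ∉ p.tail := by
    have h := hid2 ▸ hnd
    exact (List.nodup_cons.1 h).1
  have hs2 : s ∈ p.tail := by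
    have hsp : s ∈ p := by rw [hid1]; simp
    rw [hid2] at hsp
    rcases List.mem_cons.1 hsp with h | h
    · exact absurd h.symm hts
    · exact h
  have ht2 : t ∈ p.dropLast := by
    have htp : t ∈ p := by rw [hid2]; simp
    rw [hid1] at htp
    rcases List.mem_append.1 htp with h | h
    · exact h
    · simp at h; exact absurd h hts
  by_cases his : i = s
  · subst his; simp [hs1, hs2]
  · by_cases hit : i = t
    · subst hit; simp [ht1, ht2, his]
    · have e1 : i ∈ p.dropLast ↔ i ∈ p := by
        conv_rhs => rw [hid1]
        simp [his]
      have e2 : i ∈ p.tail ↔ i ∈ p := by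
        conv_rhs => rw [hid2]
        simp [hit]
      by_cases hip : i ∈ p
      · simp [e1.2 hip, e2.2 hip, his, hit]
      · have d1 : i ∉ p.dropLast := fun h => hip (e1.1 h)
        have d2 : i ∉ p.tail := fun h => hip (e2.1 h)
        simp [d1, d2, his, hit]

/-- The unit flow of a simple path `p` from `s` (last) to `t` (head). -/
lemma path_conservation {R : Type} [Ring R] (L : Finset (V × V)) {p : List V} {s t : V}
    (hnd : p.Nodup) (hh : p.head? = some t) (hl : p.getLast? = some s) (hts : t ≠ s)
    (hEL : ∀ e ∈ pE p, e ∈ L) (i : V) :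
    (∑ e ∈ L.filter (fun e => e.2 = i), (if e ∈ (pE p).toFinset then (1 : R) else 0))
      - (∑ e ∈ L.filter (fun e => e.1 = i), (if e ∈ (pE p).toFinset then (1 : R) else 0))
      = if i = s then -1 else if i = t then 1 else 0 := by
  have hsub : (pE p).toFinset ⊆ L := by
    intro e he; exact hEL e (List.mem_toFinset.1 he)
  rw [sum_indicator_filter' L _ hsub _, sum_indicator_filter' L _ hsub _,
    card_filter_pE_snd hnd, card_filter_pE_fst hnd]
  simp only [Nat.cast_ite, Nat.cast_one, Nat.cast_zero]
  exact mem_count_combine' hnd hh hl hts i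

lemma last_not_mem_dropLast {p : List V} {s : V} (hnd : p.Nodup)
    (hl : p.getLast? = some s) (hne : p ≠ []) : s ∉ p.dropLast := by
  have h := (last_eq hl hne) ▸ hnd
  exact fun hmem => (List.disjoint_of_nodup_append h) hmem (by simp)

lemma snd_mem_dropLast {p : List V} {e : V × V} (he : e ∈ pE p) : e.2 ∈ p.dropLast := by
  rw [← map_snd_pE]
  exact List.mem_map_of_mem he

lemma snd_ne_last {p : List V} {s : V} (hnd : p.Nodup) (hl : p.getLast? = some s)
    (hne : p ≠ []) {e : V × V} (he : e ∈ pE p) : e.2 ≠ s :=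
  fun h => last_not_mem_dropLast hnd hl hne (h ▸ snd_mem_dropLast he)

lemma first_edge {p : List V} {t : V} (hh : p.head? = some t) (h2 : 2 ≤ p.length) :
    ∃ u, (u, t) ∈ pE p := by
  rcases p with _ | ⟨a, _ | ⟨b, l⟩⟩
  · simp at hh
  · simp at h2
  · simp at hh
    exact ⟨b, by simp [hh]⟩

lemma sum_le_one_nat {A : Type} [DecidableEq A] (S : Finset A) (h : A → ℕ)
    (h1 : ∀ e ∈ S, h e ≤ 1)
    (huni : ∀ e ∈ S, ∀ e' ∈ S, h e ≠ 0 → h e' ≠ 0 → e = e') : ∑ e ∈ S, h e ≤ 1 := by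
  by_cases hz : ∀ e ∈ S, h e = 0
  · rw [Finset.sum_eq_zero hz]; omega
  · push_neg at hz
    obtain ⟨e₀, he₀, hne⟩ := hz
    rw [Finset.sum_eq_single_of_mem e₀ he₀ (fun b hb hbne => by
      by_contra h'
      exact hbne (huni b hb e₀ he₀ h' hne))]
    exact h1 e₀ he₀

end DOFaux

namespace DOFaux
set_option linter.unusedSectionVars false

variable {V : Type} [DecidableEq V]

lemma getElem?_pE {p : List V} {j : ℕ} {e : V × V} (h : (pE p)[j]? = some e) :
    j + 1 < p.length ∧ p[j+1]? = some e.1 ∧ p[j]? = some e.2 := by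
  obtain ⟨hj, hv⟩ := List.getElem?_eq_some_iff.1 h
  have hlen : j + 1 < p.length := by have := length_pE p; omega
  have h2 := getElem_pE p j hlen
  rw [h2] at hv
  refine ⟨hlen, ?_, ?_⟩
  · rw [List.getElem?_eq_getElem hlen, ← hv]
  · rw [List.getElem?_eq_getElem (by omega : j < p.length), ← hv]

lemma pE_getElem?_of {p : List V} {j : ℕ} (hlen : j + 1 < p.length) :
    (pE p)[j]? = some ((p[j+1], p[j]'(by omega))) := by
  rw [List.getElem?_eq_getElem (by rw [length_pE]; omega : j < (pE p).length)]
  rw [getElem_pE p j hlen]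

lemma mem_pE_iff {p : List V} {e : V × V} :
    e ∈ pE p ↔ ∃ j : ℕ, (pE p)[j]? = some e := by
  rw [List.mem_iff_getElem]
  constructor
  · rintro ⟨j, hj, hv⟩
    exact ⟨j, by rw [List.getElem?_eq_getElem hj, hv]⟩
  · rintro ⟨j, hj⟩
    obtain ⟨h1, h2⟩ := List.getElem?_eq_some_iff.1 hj
    exact ⟨j, h1, h2⟩

lemma head?_eq_getElem?_zero {p : List V} : p.head? = p[0]? := by
  cases p <;> simp

lemma getLast?_eq_getElem?' {p : List V} : p.getLast? = p[p.length - 1]? := by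
  cases hp : p with
  | nil => simp
  | cons a l =>
    rw [← hp]
    have hne : p ≠ [] := by rw [hp]; simp
    rw [List.getLast?_eq_getLast hne, List.getLast_eq_getElem,
      List.getElem?_eq_getElem (by have := List.length_pos_iff.2 hne; omega)]

end DOFaux

open DOFaux in
set_option maxHeartbeats 2000000 in
/-- Feasibility equivalence of the relaxed demand-based model and the relaxed
origin-based model: the demand-based model (0-1 per-demand unit flows with conservation,
capacity and sub-path optimality constraints) is feasible if and only if the
origin-based model (0-1 per-origin indicators `y` with in-degree constraints and
nonnegative aggregated flows `f` with conservation, flow-bound and capacity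
constraints) is feasible. -/
theorem demand_origin_feasibility_equiv {V D : Type} [Fintype V] [DecidableEq V]
    [Fintype D] [DecidableEq D]
    (L : Finset (V × V)) (c : V × V → ℝ)
    (sk tk : D → V) (d : D → ℝ) (hd : ∀ k, 0 < d k) (hst : ∀ k, sk k ≠ tk k) :
    (∃ x : D → V × V → ℕ,
      (∀ k e, x k e ≤ 1)
      ∧ (∀ k (i : V),
          ∑ e ∈ L.filter (fun e => e.2 = i), (x k e : ℤ)
            - ∑ e ∈ L.filter (fun e => e.1 = i), (x k e : ℤ)
          = if i = sk k then -1 else if i = tk k then 1 else 0)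
      ∧ (∀ e ∈ L, ∑ k : D, d k * (x k e : ℝ) ≤ c e)
      ∧ (∀ (s i : V), i ≠ s →
          ∑ e ∈ L.filter (fun e => e.2 = i),
            (Finset.univ.filter (fun k => sk k = s)).sup (fun k => x k e) ≤ 1))
    ↔ (∃ (y : V → V × V → ℕ) (f : V → V × V → ℝ),
      (∀ s e, y s e ≤ 1) ∧ (∀ s e, 0 ≤ f s e)
      ∧ (∀ s e, f s e ≤ (y s e : ℝ) * ∑ k ∈ Finset.univ.filter (fun k => sk k = s), d k)
      ∧ (∀ (s i : V),
          ∑ e ∈ L.filter (fun e => e.2 = i), f s e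
            - ∑ e ∈ L.filter (fun e => e.1 = i), f s e
          = (∑ k ∈ Finset.univ.filter (fun k => sk k = s ∧ tk k = i), d k)
            - (if i = s then ∑ k ∈ Finset.univ.filter (fun k => sk k = s), d k else 0))
      ∧ (∀ e ∈ L, ∑ s : V, f s e ≤ c e)
      ∧ (∀ (s i : V),
          (i = s → ∑ e ∈ L.filter (fun e => e.2 = i), y s e = 0)
          ∧ ((∃ k, sk k = s ∧ tk k = i) → ∑ e ∈ L.filter (fun e => e.2 = i), y s e = 1)
          ∧ (i ≠ s → ∑ e ∈ L.filter (fun e => e.2 = i), y s e ≤ 1))) := by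
  classical
  constructor
  · rintro ⟨x, hx1, hx2, hx3, hx4⟩
    -- two positive in-edges at `i ≠ s` used by demands from origin `s` coincide
    have key : ∀ (s i : V), i ≠ s → ∀ e, e ∈ L → e.2 = i → ∀ e', e' ∈ L → e'.2 = i →
        (∃ k, sk k = s ∧ 1 ≤ x k e) → (∃ k', sk k' = s ∧ 1 ≤ x k' e') → e = e' := by
      rintro s i his e heL he2 e' he'L he'2 ⟨k, hks, hke⟩ ⟨k', hk's, hk'e⟩
      by_contra hne
      have hsup1 : 1 ≤ (Finset.univ.filter (fun k => sk k = s)).sup (fun k => x k e) :=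
        le_trans hke (Finset.le_sup (f := fun k => x k e) (Finset.mem_filter.2 ⟨Finset.mem_univ k, hks⟩))
      have hsup2 : 1 ≤ (Finset.univ.filter (fun k => sk k = s)).sup (fun k => x k e') :=
        le_trans hk'e (Finset.le_sup (f := fun k => x k e') (Finset.mem_filter.2 ⟨Finset.mem_univ k', hk's⟩))
      have hpair : (Finset.univ.filter (fun k => sk k = s)).sup (fun k => x k e)
          + (Finset.univ.filter (fun k => sk k = s)).sup (fun k => x k e')
          ≤ ∑ e'' ∈ L.filter (fun e'' => e''.2 = i),
              (Finset.univ.filter (fun k => sk k = s)).sup (fun k => x k e'') := by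
        rw [← Finset.sum_pair (f := fun e'' => (Finset.univ.filter (fun k => sk k = s)).sup (fun k => x k e'')) hne]
        exact Finset.sum_le_sum_of_subset (Finset.insert_subset
          (Finset.mem_filter.2 ⟨heL, he2⟩)
          (Finset.singleton_subset_iff.2 (Finset.mem_filter.2 ⟨he'L, he'2⟩)))
      have := hx4 s i his
      omega
    have hpath : ∀ k : D, ∃ p : List V, p.Nodup ∧ p.head? = some (tk k) ∧
        p.getLast? = some (sk k) ∧ ∀ e ∈ pE p, e ∈ L ∧ 0 < ((x k e : ℝ)) := by
      intro k
      refine exists_walk L (fun e => (x k e : ℝ)) (fun e => Nat.cast_nonneg _) (sk k) (tk k)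
        (fun h => hst k h.symm) (fun i => if i = tk k then 1 else 0) ?_
        (by show (0:ℝ) < if tk k = tk k then 1 else 0; rw [if_pos rfl]; norm_num) ?_ ?_
      · intro i _
        show (0:ℝ) ≤ if i = tk k then 1 else 0
        split <;> norm_num
      · intro i his
        have h2 := hx2 k i
        rw [if_neg his] at h2
        by_cases hit : i = tk k
        · rw [if_pos hit] at h2 ⊢
          have h3 := congrArg (fun z : ℤ => (z : ℝ)) h2
          push_cast at h3
          linarith
        · rw [if_neg hit] at h2 ⊢
          have h3 := congrArg (fun z : ℤ => (z : ℝ)) h2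
          push_cast at h3
          linarith
      · intro i his e heL he2 hge e' he'L he'2 hge'
        refine key (sk k) i his e heL he2 e' he'L he'2 ⟨k, rfl, ?_⟩ ⟨k, rfl, ?_⟩
        · have h4 : 0 < x k e := by exact_mod_cast hge
          omega
        · have h4 : 0 < x k e' := by exact_mod_cast hge'
          omega
    choose p hp1 hp2 hp3 hp4 using hpath
    have hx'le : ∀ k e, e ∈ (pE (p k)).toFinset → 1 ≤ x k e := by
      intro k e he
      have h := (hp4 k e (List.mem_toFinset.1 he)).2
      have : 0 < x k e := by exact_mod_cast h
      omega
    have hEL : ∀ k e, e ∈ (pE (p k)).toFinset → e ∈ L :=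
      fun k e he => (hp4 k e (List.mem_toFinset.1 he)).1
    have htksk : ∀ k : D, tk k ≠ sk k := fun k h => hst k h.symm
    have hlen2 : ∀ k, 2 ≤ (p k).length := fun k => length_two_le (hp2 k) (hp3 k) (htksk k)
    -- cross-demand uniqueness for cleaned paths
    have key' : ∀ (s i : V), i ≠ s → ∀ e, e ∈ L → e.2 = i → ∀ e', e' ∈ L → e'.2 = i →
        (∃ k, sk k = s ∧ e ∈ (pE (p k)).toFinset) →
        (∃ k', sk k' = s ∧ e' ∈ (pE (p k')).toFinset) → e = e' := by
      rintro s i his e heL he2 e' he'L he'2 ⟨k, hks, hke⟩ ⟨k', hk's, hk'e⟩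
      exact key s i his e heL he2 e' he'L he'2 ⟨k, hks, hx'le k e hke⟩
        ⟨k', hk's, hx'le k' e' hk'e⟩
    refine ⟨fun s e => if (∃ k, sk k = s ∧ e ∈ (pE (p k)).toFinset) then 1 else 0,
      fun s e => ∑ k ∈ Finset.univ.filter (fun k => sk k = s),
        d k * (if e ∈ (pE (p k)).toFinset then (1 : ℝ) else 0),
      ?_, ?_, ?_, ?_, ?_, ?_⟩
    · intro s e; dsimp only; split <;> omega
    · intro s e
      refine Finset.sum_nonneg fun k _ => mul_nonneg (hd k).le ?_
      split <;> norm_num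
    · intro s e
      dsimp only
      by_cases hex : ∃ k, sk k = s ∧ e ∈ (pE (p k)).toFinset
      · rw [if_pos hex]
        push_cast
        rw [one_mul]
        refine Finset.sum_le_sum fun k hk => ?_
        have := hd k
        split <;> nlinarith
      · rw [if_neg hex]
        push_cast
        rw [zero_mul]
        refine le_of_eq (Finset.sum_eq_zero fun k hk => ?_)
        have hks : sk k = s := (Finset.mem_filter.1 hk).2
        rw [if_neg (fun hmem => hex ⟨k, hks, hmem⟩), mul_zero]
    · intro s i
      dsimp only
      have hswap : ∀ (P : V × V → Prop) (inst : DecidablePred P),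
          ∑ e ∈ L.filter P, ∑ k ∈ Finset.univ.filter (fun k => sk k = s),
            d k * (if e ∈ (pE (p k)).toFinset then (1 : ℝ) else 0)
          = ∑ k ∈ Finset.univ.filter (fun k => sk k = s),
            d k * ∑ e ∈ L.filter P, (if e ∈ (pE (p k)).toFinset then (1 : ℝ) else 0) := by
        intro P inst
        rw [Finset.sum_comm]
        exact Finset.sum_congr rfl fun k _ => (Finset.mul_sum _ _ _).symm
      rw [hswap _ _, hswap _ _, ← Finset.sum_sub_distrib]
      have hterm : ∀ k ∈ Finset.univ.filter (fun k => sk k = s),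
          d k * ∑ e ∈ L.filter (fun e => e.2 = i), (if e ∈ (pE (p k)).toFinset then (1:ℝ) else 0)
          - d k * ∑ e ∈ L.filter (fun e => e.1 = i), (if e ∈ (pE (p k)).toFinset then (1:ℝ) else 0)
          = d k * (if i = s then -1 else if i = tk k then 1 else 0) := by
        intro k hk
        have hks : sk k = s := (Finset.mem_filter.1 hk).2
        rw [← mul_sub]
        congr 1
        rw [path_conservation (R := ℝ) L (hp1 k) (hp2 k) (hp3 k) (htksk k)
          (fun e he => (hp4 k e he).1) i, hks]
      rw [Finset.sum_congr rfl hterm]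
      by_cases his : i = s
      · rw [if_pos his]
        have hempty : Finset.univ.filter (fun k => sk k = s ∧ tk k = i) = ∅ := by
          refine Finset.filter_eq_empty_iff.2 fun {k} _ => ?_
          rintro ⟨h1, h2⟩
          exact hst k (h1.trans (his ▸ h2.symm))
        rw [hempty]
        simp [his]
      · rw [if_neg his]
        have h1 : ∀ k ∈ Finset.univ.filter (fun k => sk k = s),
            d k * (if i = s then (-1:ℝ) else if i = tk k then 1 else 0)
            = if sk k = s ∧ tk k = i then d k else 0 := by
          intro k hk
          have hks : sk k = s := (Finset.mem_filter.1 hk).2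
          rw [if_neg his]
          by_cases hit : i = tk k
          · rw [if_pos hit, if_pos ⟨hks, hit.symm⟩, mul_one]
          · rw [if_neg hit, if_neg (fun h => hit h.2.symm), mul_zero]
        rw [Finset.sum_congr rfl h1, ← Finset.sum_filter, sub_zero]
        congr 1
        ext k
        simp only [Finset.mem_filter, Finset.mem_univ, true_and]
        tauto
    · intro e heL
      dsimp only
      rw [Finset.sum_fiberwise]
      have h2 : ∀ k : D, d k * (if e ∈ (pE (p k)).toFinset then (1:ℝ) else 0)
          ≤ d k * (x k e : ℝ) := by
        intro k
        by_cases hm : e ∈ (pE (p k)).toFinset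
        · rw [if_pos hm]
          have := hx'le k e hm
          have h3 : (1:ℝ) ≤ (x k e : ℝ) := by exact_mod_cast this
          nlinarith [hd k]
        · rw [if_neg hm, mul_zero]
          exact mul_nonneg (hd k).le (Nat.cast_nonneg _)
      exact le_trans (Finset.sum_le_sum fun k _ => h2 k) (hx3 e heL)
    · intro s i
      refine ⟨?_, ?_, ?_⟩
      · intro his
        refine Finset.sum_eq_zero fun e he => ?_
        have he2 : e.2 = i := (Finset.mem_filter.1 he).2
        show (if ∃ k, sk k = s ∧ e ∈ (pE (p k)).toFinset then (1:ℕ) else 0) = 0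
        rw [if_neg]
        rintro ⟨k, hks, hke⟩
        have hne := ne_nil_of_head? (hp2 k)
        exact snd_ne_last (hp1 k) (hp3 k) hne (List.mem_toFinset.1 hke)
          (by rw [he2, his, ← hks])
      · rintro ⟨k, hks, hkt⟩
        have his : i ≠ s := by
          rw [← hks, ← hkt]; exact fun h => hst k h.symm
        obtain ⟨u, hu⟩ := first_edge (hp2 k) (hlen2 k)
        have he₀L : (u, tk k) ∈ L := (hp4 k _ hu).1
        have he₀mem : (u, i) ∈ L.filter (fun e => e.2 = i) := by
          rw [← hkt]
          exact Finset.mem_filter.2 ⟨he₀L, rfl⟩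
        have hval : (if (∃ k', sk k' = s ∧ (u, i) ∈ (pE (p k')).toFinset) then (1:ℕ) else 0) = 1 :=
          if_pos ⟨k, hks, by rw [← hkt]; exact List.mem_toFinset.2 hu⟩
        have hz : ∀ b ∈ L.filter (fun e => e.2 = i), b ≠ (u, i) →
            (if ∃ k', sk k' = s ∧ b ∈ (pE (p k')).toFinset then (1:ℕ) else 0) = 0 := by
          intro b hb hbne
          rw [if_neg]
          rintro ⟨k', hk's, hk'b⟩
          refine hbne (key' s i his b (Finset.mem_filter.1 hb).1 (Finset.mem_filter.1 hb).2
            (u, i) (hkt ▸ he₀L) rfl ⟨k', hk's, hk'b⟩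
            ⟨k, hks, by rw [← hkt]; exact List.mem_toFinset.2 hu⟩)
        dsimp only
        rw [Finset.sum_eq_single_of_mem (u, i) he₀mem hz]
        exact hval
      · intro his
        refine sum_le_one_nat _ _ (fun e _ => by dsimp only; split <;> omega) ?_
        intro e he e' he' hne hne'
        dsimp only at hne hne'
        have h1 : ∃ k, sk k = s ∧ e ∈ (pE (p k)).toFinset := by
          by_contra h; rw [if_neg h] at hne; exact hne rfl
        have h2 : ∃ k', sk k' = s ∧ e' ∈ (pE (p k')).toFinset := by
          by_contra h; rw [if_neg h] at hne'; exact hne' rfl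
        exact key' s i his e (Finset.mem_filter.1 he).1 (Finset.mem_filter.1 he).2
          e' (Finset.mem_filter.1 he').1 (Finset.mem_filter.1 he').2 h1 h2
  · rintro ⟨y, f, hy1, hf0, hfy, hfc, hcap, hyd⟩
    have hU : ∀ (s i : V), i ≠ s → ∀ e, e ∈ L → e.2 = i → 0 < f s e →
        ∀ e', e' ∈ L → e'.2 = i → 0 < f s e' → e = e' := by
      intro s i his e heL he2 hfe e' he'L he'2 hfe'
      by_contra hne
      have hy1e : 1 ≤ y s e := by
        rcases Nat.eq_zero_or_pos (y s e) with h0 | h1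
        · exfalso
          have h2 := hfy s e
          rw [h0] at h2
          push_cast at h2
          linarith
        · exact h1
      have hy1e' : 1 ≤ y s e' := by
        rcases Nat.eq_zero_or_pos (y s e') with h0 | h1
        · exfalso
          have h2 := hfy s e'
          rw [h0] at h2
          push_cast at h2
          linarith
        · exact h1
      have hpair : y s e + y s e' ≤ ∑ e'' ∈ L.filter (fun e'' => e''.2 = i), y s e'' := by
        rw [← Finset.sum_pair (f := fun e'' => y s e'') hne]
        exact Finset.sum_le_sum_of_subset (Finset.insert_subset
          (Finset.mem_filter.2 ⟨heL, he2⟩)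
          (Finset.singleton_subset_iff.2 (Finset.mem_filter.2 ⟨he'L, he'2⟩)))
      have h3 := (hyd s i).2.2 his
      omega
    have hpath : ∀ k : D, ∃ p : List V, p.Nodup ∧ p.head? = some (tk k) ∧
        p.getLast? = some (sk k) ∧ ∀ e ∈ pE p, e ∈ L ∧ 0 < f (sk k) e := by
      intro k
      refine exists_walk L (f (sk k)) (fun e => hf0 (sk k) e) (sk k) (tk k)
        (fun h => hst k h.symm)
        (fun i => ∑ k' ∈ Finset.univ.filter (fun k' => sk k' = sk k ∧ tk k' = i), d k')
        (fun i _ => Finset.sum_nonneg fun k' _ => (hd k').le)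
        ?_ ?_ (hU (sk k))
      · exact lt_of_lt_of_le (hd k) (Finset.single_le_sum (fun k' _ => (hd k').le)
          (Finset.mem_filter.2 ⟨Finset.mem_univ k, rfl, rfl⟩))
      · intro i his
        have h2 := hfc (sk k) i
        rw [if_neg his] at h2
        linarith
    choose p hp1 hp2 hp3 hp4 using hpath
    have hfpos : ∀ k e, e ∈ (pE (p k)).toFinset → 0 < f (sk k) e :=
      fun k e he => (hp4 k e (List.mem_toFinset.1 he)).2
    have hhead : ∀ k : D, (p k)[0]? = some (tk k) := by
      intro k; rw [← head?_eq_getElem?_zero]; exact hp2 k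
    have hlastne : ∀ k e, e ∈ (pE (p k)).toFinset → e.2 ≠ sk k :=
      fun k e he => snd_ne_last (hp1 k) (hp3 k) (ne_nil_of_head? (hp2 k)) (List.mem_toFinset.1 he)
    have hjpos : ∀ (k : D) (j : ℕ) (e : V × V), ¬ tk k = e.2 → (pE (p k))[j]? = some e → 1 ≤ j := by
      intro k j e hkt hj
      by_contra h
      have hj0 : j = 0 := by omega
      subst hj0
      obtain ⟨hl1, hl2, hl3⟩ := getElem?_pE hj
      exact hkt (Option.some_inj.1 ((hhead k).symm.trans hl3))
    have hnext : ∀ (s : V) (e : V × V), e ∈ L → 0 < f s e → e.2 ≠ s →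
        ∀ (k' : D) (j' : ℕ) (e' : V × V), sk k' = s → e'.1 = e.2 →
        (pE (p k'))[j']? = some e' → (pE (p k'))[j'+1]? = some e := by
      intro s e heL hfe hv_ne k' j' e' hk's he'1 hj'
      obtain ⟨hl1, hl2, hl3⟩ := getElem?_pE hj'
      have hlast := hp3 k'
      rw [getLast?_eq_getElem?'] at hlast
      have hne2 : j' + 1 ≠ (p k').length - 1 := by
        intro hcontra
        rw [← hcontra] at hlast
        have h4 : e'.1 = sk k' := Option.some_inj.1 (hl2.symm.trans hlast)
        rw [he'1, hk's] at h4
        exact hv_ne h4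
      have hlen2' : j' + 1 + 1 < (p k').length := by omega
      have hq := pE_getElem?_of (p := p k') hlen2'
      have hmem : ((p k')[j'+1+1], (p k')[j'+1]'(by omega)) ∈ pE (p k') :=
        mem_pE_iff.2 ⟨j'+1, hq⟩
      have h5 := hp4 k' _ hmem
      rw [hk's] at h5
      have hsnd : (p k')[j'+1]'(by omega) = e.2 := by
        have h6 := List.getElem?_eq_getElem (show j'+1 < (p k').length by omega)
        have h7 : e'.1 = (p k')[j'+1]'(by omega) := Option.some_inj.1 (hl2.symm.trans h6)
        rw [← h7, he'1]
      have h8 := hU s e.2 hv_ne _ h5.1 hsnd h5.2 e heL rfl hfe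
      rw [hq, h8]
    refine ⟨fun k e => if e ∈ (pE (p k)).toFinset then 1 else 0, ?_, ?_, ?_, ?_⟩
    · intro k e; dsimp only; split <;> omega
    · intro k i
      dsimp only
      have h1 := path_conservation (R := ℤ) L (hp1 k) (hp2 k) (hp3 k)
        (fun h => hst k h.symm) (fun e he => (hp4 k e he).1) i
      simp only [Nat.cast_ite, Nat.cast_one, Nat.cast_zero]
      exact h1
    · intro e heL
      have hcast : ∀ (k : D) (e : V × V), ((if e ∈ (pE (p k)).toFinset then (1:ℕ) else 0 : ℕ) : ℝ)
          = (if e ∈ (pE (p k)).toFinset then (1:ℝ) else 0) := by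
        intro k e; split <;> simp
      have hidxbound : ∀ (k : D) (j : ℕ) (e' : V × V), (pE (p k))[j]? = some e' →
          j ≤ Fintype.card V := by
        intro k j e' hj
        obtain ⟨h1, _, _⟩ := getElem?_pE hj
        have := (hp1 k).length_le_card
        omega
      have hload : ∀ (n : ℕ) (s : V) (e : V × V), e ∈ L →
          (∀ (k : D) (j : ℕ), sk k = s → (pE (p k))[j]? = some e → j ≤ n) →
          ∑ k ∈ Finset.univ.filter (fun k => sk k = s),
            d k * (if e ∈ (pE (p k)).toFinset then (1:ℝ) else 0) ≤ f s e := by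
        intro n
        induction n using Nat.strong_induction_on with
        | _ n ih =>
          intro s e heL hidx
          by_cases huser : ∃ k, sk k = s ∧ e ∈ (pE (p k)).toFinset
          · obtain ⟨k₀, hk₀s, hk₀e⟩ := huser
            have hfe : 0 < f s e := hk₀s ▸ hfpos k₀ e hk₀e
            have hv_ne : e.2 ≠ s := hk₀s ▸ hlastne k₀ e hk₀e
            have hin : ∑ e'' ∈ L.filter (fun e'' => e''.2 = e.2), f s e'' = f s e := by
              refine Finset.sum_eq_single_of_mem e (Finset.mem_filter.2 ⟨heL, rfl⟩) ?_
              intro b hb hbne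
              rcases (hf0 s b).eq_or_lt with h | h
              · exact h.symm
              · exact absurd (hU s e.2 hv_ne b (Finset.mem_filter.1 hb).1
                  (Finset.mem_filter.1 hb).2 h e heL rfl hfe) hbne
            have hconsv := hfc s e.2
            rw [if_neg hv_ne, sub_zero, hin] at hconsv
            rw [← Finset.sum_filter_add_sum_filter_not (Finset.univ.filter (fun k => sk k = s))
              (fun k => tk k = e.2) (fun k => d k * (if e ∈ (pE (p k)).toFinset then (1:ℝ) else 0))]
            have hT1 : ∑ k ∈ (Finset.univ.filter (fun k => sk k = s)).filter (fun k => tk k = e.2),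
                d k * (if e ∈ (pE (p k)).toFinset then (1:ℝ) else 0)
                ≤ ∑ k ∈ Finset.univ.filter (fun k => sk k = s ∧ tk k = e.2), d k := by
              rw [Finset.filter_filter]
              refine Finset.sum_le_sum fun k hk => ?_
              have := hd k
              split <;> nlinarith
            have hT2 : ∑ k ∈ (Finset.univ.filter (fun k => sk k = s)).filter
                  (fun k => ¬ tk k = e.2),
                d k * (if e ∈ (pE (p k)).toFinset then (1:ℝ) else 0)
                ≤ ∑ e' ∈ L.filter (fun e' => e'.1 = e.2), f s e' := by
              by_cases hA2 : ∃ k, sk k = s ∧ ¬ tk k = e.2 ∧ e ∈ (pE (p k)).toFinset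
              · obtain ⟨k₁, hk₁s, hk₁t, hk₁e⟩ := hA2
                obtain ⟨j₁, hj₁⟩ := mem_pE_iff.1 (List.mem_toFinset.1 hk₁e)
                have hn1 : 1 ≤ n := le_trans (hjpos k₁ j₁ e hk₁t hj₁) (hidx k₁ j₁ hk₁s hj₁)
                have hstep : ∀ k ∈ (Finset.univ.filter (fun k => sk k = s)).filter
                      (fun k => ¬ tk k = e.2),
                    d k * (if e ∈ (pE (p k)).toFinset then (1:ℝ) else 0)
                    ≤ ∑ e' ∈ L.filter (fun e' => e'.1 = e.2),
                        d k * (if e' ∈ (pE (p k)).toFinset then (1:ℝ) else 0) := by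
                  intro k hk
                  obtain ⟨hk1, hk2⟩ := Finset.mem_filter.1 hk
                  have hks : sk k = s := (Finset.mem_filter.1 hk1).2
                  by_cases hm : e ∈ (pE (p k)).toFinset
                  · rw [if_pos hm, mul_one]
                    obtain ⟨j, hj⟩ := mem_pE_iff.1 (List.mem_toFinset.1 hm)
                    have hj1 : 1 ≤ j := hjpos k j e hk2 hj
                    obtain ⟨hl1, hl2, hl3⟩ := getElem?_pE hj
                    have hlenp : (j-1) + 1 < (p k).length := by omega
                    have hq := pE_getElem?_of (p := p k) hlenp
                    have hmm : ((p k)[(j-1)+1], (p k)[j-1]'(by omega)) ∈ pE (p k) :=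
                      mem_pE_iff.2 ⟨j-1, hq⟩
                    have hL' := hp4 k _ hmm
                    have hfst : (p k)[(j-1)+1]'(by omega) = e.2 := by
                      have h6 := List.getElem?_eq_getElem (show j < (p k).length by omega)
                      have h7 : (p k)[j]'(by omega) = e.2 := Option.some_inj.1 (h6.symm.trans hl3)
                      rw [← h7]
                      congr 1
                      omega
                    have h10 : d k = d k * (if ((p k)[(j-1)+1], (p k)[j-1]'(by omega))
                        ∈ (pE (p k)).toFinset then (1:ℝ) else 0) := by
                      rw [if_pos (List.mem_toFinset.2 hmm), mul_one]
                    exact le_trans (le_of_eq h10) (Finset.single_le_sum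
                      (f := fun e' => d k * (if e' ∈ (pE (p k)).toFinset then (1:ℝ) else 0))
                      (fun e' _ => mul_nonneg (hd k).le (by split <;> norm_num))
                      (Finset.mem_filter.2 ⟨hL'.1, hfst⟩))
                  · rw [if_neg hm, mul_zero]
                    exact Finset.sum_nonneg fun e' _ =>
                      mul_nonneg (hd k).le (by split <;> norm_num)
                refine le_trans (Finset.sum_le_sum hstep) ?_
                rw [Finset.sum_comm]
                refine Finset.sum_le_sum fun e' he' => ?_
                have he'L : e' ∈ L := (Finset.mem_filter.1 he').1
                have he'1 : e'.1 = e.2 := (Finset.mem_filter.1 he').2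
                refine le_trans (Finset.sum_le_sum_of_subset_of_nonneg (Finset.filter_subset _ _)
                  (fun k _ _ => mul_nonneg (hd k).le (by split <;> norm_num))) ?_
                refine ih (n-1) (by omega) s e' he'L ?_
                intro k' j' hk's hj'
                have h8 := hnext s e heL hfe hv_ne k' j' e' hk's he'1 hj'
                have h9 := hidx k' (j'+1) hk's h8
                omega
              · have hz : ∑ k ∈ (Finset.univ.filter (fun k => sk k = s)).filter
                      (fun k => ¬ tk k = e.2),
                    d k * (if e ∈ (pE (p k)).toFinset then (1:ℝ) else 0) = 0 := by
                  refine Finset.sum_eq_zero fun k hk => ?_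
                  obtain ⟨hk1, hk2⟩ := Finset.mem_filter.1 hk
                  rw [if_neg (fun hm => hA2 ⟨k, (Finset.mem_filter.1 hk1).2, hk2, hm⟩), mul_zero]
                rw [hz]
                exact Finset.sum_nonneg fun e' _ => hf0 s e'
            linarith
          · refine le_trans (le_of_eq (Finset.sum_eq_zero fun k hk => ?_)) (hf0 s e)
            rw [if_neg (fun hm => huser ⟨k, (Finset.mem_filter.1 hk).2, hm⟩), mul_zero]
      dsimp only
      calc ∑ k : D, d k * ((if e ∈ (pE (p k)).toFinset then (1:ℕ) else 0 : ℕ) : ℝ)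
          = ∑ s : V, ∑ k ∈ Finset.univ.filter (fun k => sk k = s),
              d k * (if e ∈ (pE (p k)).toFinset then (1:ℝ) else 0) := by
            rw [Finset.sum_fiberwise]
            exact Finset.sum_congr rfl fun k _ => by rw [hcast]
        _ ≤ ∑ s : V, f s e := Finset.sum_le_sum fun s _ =>
            hload (Fintype.card V) s e heL (fun k j _ hj => hidxbound k j e hj)
        _ ≤ c e := hcap e heL
    · intro s i his
      refine sum_le_one_nat _ _ (fun e _ => Finset.sup_le fun k hk => by
        dsimp only; split <;> omega) ?_
      intro e he e' he' hne hne'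
      have hex : ∀ (b : V × V), ((Finset.univ.filter (fun k => sk k = s)).sup
          (fun k => if b ∈ (pE (p k)).toFinset then 1 else 0)) ≠ 0 →
          ∃ k, sk k = s ∧ b ∈ (pE (p k)).toFinset := by
        intro b h
        by_contra hc
        push_neg at hc
        apply h
        refine Nat.le_zero.1 (Finset.sup_le fun k hk => ?_)
        rw [if_neg (hc k (Finset.mem_filter.1 hk).2)]
      obtain ⟨k, hks, hke⟩ := hex e hne
      obtain ⟨k', hk's, hk'e⟩ := hex e' hne'
      exact hU s i his e (Finset.mem_filter.1 he).1 (Finset.mem_filter.1 he).2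
        (hks ▸ hfpos k e hke) e' (Finset.mem_filter.1 he').1 (Finset.mem_filter.1 he').2
        (hk's ▸ hfpos k' e' hk'e)
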